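/- With φ, r₁, r₂ as above, define Q(x,y) = (1/(r₁r₂)) · [[2r₂, 2x(1+2y²), x y r₁],[−x r₂, 2(2+x²y²), −2y r₁],[−2x y r₂, y(4−x²), 2r₁]]. Then Q(x,y) is orthogonal and φ(x,y) = Q(x,y)* Λ Q(x,y), where Λ = diag(1,−1,0). -/
import Mathlib

set_option maxHeartbeats 4000000

open Matrix

noncomputable def r1 (x y : ℝ) : ℝ := Real.sqrt (4 + x^2 + 4*x^2*y^2)
noncomputable def r2 (x y : ℝ) : ℝ := Real.sqrt (4 + 4*y^2 + x^2*y^2)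

noncomputable def phi (x y : ℝ) : Matrix (Fin 3) (Fin 3) ℝ :=
  ((r1 x y)^2 * (r2 x y)^2)⁻¹ •
    !![(4 - x^2) * (r2 x y)^2,  2*x*(r2 x y)^3,  0;
       2*x*(r2 x y)^3,  -4*(4 - x^2 - 4*x^2*y^4 + x^4*y^4),  2*y*(r1 x y)^3;
       0,  2*y*(r1 x y)^3,  y^2*(x^2 - 4)*(r1 x y)^2]

noncomputable def TX : Matrix (Fin 3) (Fin 3) ℝ := !![0,1,0;1,0,0;0,0,0]

noncomputable def Qmat (x y : ℝ) : Matrix (Fin 3) (Fin 3) ℝ :=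
  (r1 x y * r2 x y)⁻¹ •
    !![2*(r2 x y),  2*x*(1+2*y^2),  x*y*(r1 x y);
       -x*(r2 x y),  2*(2+x^2*y^2),  -2*y*(r1 x y);
       -2*x*y*(r2 x y),  y*(4-x^2),  2*(r1 x y)]

noncomputable def Lam : Matrix (Fin 3) (Fin 3) ℝ := Matrix.diagonal ![1, -1, 0]

theorem stmt_4 (x y : ℝ) :
    (Qmat x y)ᵀ * Qmat x y = 1 ∧ phi x y = (Qmat x y)ᵀ * Lam * Qmat x y := by
  have ha0 : (0:ℝ) < r1 x y := Real.sqrt_pos.2 (by positivity)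
  have hb0 : (0:ℝ) < r2 x y := Real.sqrt_pos.2 (by positivity)
  have ha2 : (r1 x y)^2 = 4 + x^2 + 4*x^2*y^2 := Real.sq_sqrt (by positivity)
  have hb2 : (r2 x y)^2 = 4 + 4*y^2 + x^2*y^2 := Real.sq_sqrt (by positivity)
  have ha3 : (r1 x y)^3 = r1 x y * (4 + x^2 + 4*x^2*y^2) := by
    rw [pow_succ, mul_comm, ha2]
  have hb3 : (r2 x y)^3 = r2 x y * (4 + 4*y^2 + x^2*y^2) := by
    rw [pow_succ, mul_comm, hb2]
  have ha4 : (r1 x y)^4 = (4 + x^2 + 4*x^2*y^2)^2 := by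
    rw [show (4:ℕ)=2*2 from rfl, pow_mul, ha2]
  have hb4 : (r2 x y)^4 = (4 + 4*y^2 + x^2*y^2)^2 := by
    rw [show (4:ℕ)=2*2 from rfl, pow_mul, hb2]
  have ha5 : (r1 x y)^5 = r1 x y * (4 + x^2 + 4*x^2*y^2)^2 := by
    rw [show (5:ℕ)=4+1 from rfl, pow_succ, ha4, mul_comm]
  have hb5 : (r2 x y)^5 = r2 x y * (4 + 4*y^2 + x^2*y^2)^2 := by
    rw [show (5:ℕ)=4+1 from rfl, pow_succ, hb4, mul_comm]
  have ha6 : (r1 x y)^6 = (4 + x^2 + 4*x^2*y^2)^3 := by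
    rw [show (6:ℕ)=2*3 from rfl, pow_mul, ha2]
  have hb6 : (r2 x y)^6 = (4 + 4*y^2 + x^2*y^2)^3 := by
    rw [show (6:ℕ)=2*3 from rfl, pow_mul, hb2]
  constructor
  · ext i j
    fin_cases i <;> fin_cases j <;>
      simp [Qmat, Matrix.mul_apply, Fin.sum_univ_succ, Matrix.one_apply] <;>
      field_simp <;> ring_nf <;>
      simp only [ha6, ha5, ha4, ha3, ha2, hb6, hb5, hb4, hb3, hb2] <;> ring
  · ext i j
    fin_cases i <;> fin_cases j <;>
      simp [Qmat, phi, Lam, Matrix.mul_apply, Fin.sum_univ_succ] <;>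
      field_simp <;> ring_nf <;>
      simp only [ha6, ha5, ha4, ha3, ha2, hb6, hb5, hb4, hb3, hb2] <;> ring
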